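/- Let Φ : ℝ⁴ → ℝ³×ℝ³ be as follows: Φ₁(s) = (s₁²+s₂²−s₃²−s₄², 2(s₂s₃+s₁s₄), 2(s₁s₃−s₂s₄)), Φ₂(s) = (2(s₂s₃−s₁s₄), s₁²+s₃²−s₂²−s₄², −2(s₁s₂+s₃s₄)). For s ∈ S³ define v₁(s) = (s₂,−s₁,−s₄,s₃), v₂(s) = (−s₃,−s₄,s₁,s₂), v₃(s) = (−s₄,s₃,−s₂,s₁) (an orthonormal basis of T_sS³). Then the differential of Φ at s satisfies: DΦ_s(v₁) = 2·(0, Φ₁(s)×Φ₂(s)), DΦ_s(v₂) = 2·(Φ₁(s)×Φ₂(s), 0), and DΦ_s(v₃) = 2·(Φ₂(s), −Φ₁(s)), where × is the cross product in ℝ³. In particular the three images are pairwise orthogonal with norms 2, 2 and 2√2, so Φ|_{S³} is an immersion (hence a local diffeomorphism onto S*S²). -/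

import Mathlib

open scoped RealInnerProductSpace

/-- First component of `Φ : ℝ⁴ → ℝ³ × ℝ³`. -/
noncomputable def Phi1 (s : EuclideanSpace ℝ (Fin 4)) : EuclideanSpace ℝ (Fin 3) :=
  (WithLp.equiv 2 (Fin 3 → ℝ)).symm
    ![s 0 ^ 2 + s 1 ^ 2 - s 2 ^ 2 - s 3 ^ 2,
      2 * (s 1 * s 2 + s 0 * s 3),
      2 * (s 0 * s 2 - s 1 * s 3)]

/-- Second component of `Φ : ℝ⁴ → ℝ³ × ℝ³`. -/
noncomputable def Phi2 (s : EuclideanSpace ℝ (Fin 4)) : EuclideanSpace ℝ (Fin 3) :=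
  (WithLp.equiv 2 (Fin 3 → ℝ)).symm
    ![2 * (s 1 * s 2 - s 0 * s 3),
      s 0 ^ 2 + s 2 ^ 2 - s 1 ^ 2 - s 3 ^ 2,
      -2 * (s 0 * s 1 + s 2 * s 3)]

/-- The map `Φ = (Φ₁, Φ₂)`. -/
noncomputable def Phi (s : EuclideanSpace ℝ (Fin 4)) :
    EuclideanSpace ℝ (Fin 3) × EuclideanSpace ℝ (Fin 3) :=
  (Phi1 s, Phi2 s)

/-- The orthonormal frame `v₁, v₂, v₃` of `T_sS³`. -/
noncomputable def v1 (s : EuclideanSpace ℝ (Fin 4)) : EuclideanSpace ℝ (Fin 4) :=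
  (WithLp.equiv 2 (Fin 4 → ℝ)).symm ![s 1, -s 0, -s 3, s 2]

noncomputable def v2 (s : EuclideanSpace ℝ (Fin 4)) : EuclideanSpace ℝ (Fin 4) :=
  (WithLp.equiv 2 (Fin 4 → ℝ)).symm ![-s 2, -s 3, s 0, s 1]

noncomputable def v3 (s : EuclideanSpace ℝ (Fin 4)) : EuclideanSpace ℝ (Fin 4) :=
  (WithLp.equiv 2 (Fin 4 → ℝ)).symm ![-s 3, s 2, -s 1, s 0]

/-- The cross product on `ℝ³`. -/
noncomputable def cross3 (x y : EuclideanSpace ℝ (Fin 3)) : EuclideanSpace ℝ (Fin 3) :=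
  (WithLp.equiv 2 (Fin 3 → ℝ)).symm
    (crossProduct (WithLp.equiv 2 (Fin 3 → ℝ) x) (WithLp.equiv 2 (Fin 3 → ℝ) y))

/-- The Euclidean inner product on `ℝ³ × ℝ³`. -/
noncomputable def ipP (u w : EuclideanSpace ℝ (Fin 3) × EuclideanSpace ℝ (Fin 3)) : ℝ :=
  ⟪u.1, w.1⟫ + ⟪u.2, w.2⟫

noncomputable def rowCLM (a b c d : ℝ) : EuclideanSpace ℝ (Fin 4) →L[ℝ] ℝ :=
  a • EuclideanSpace.proj 0 + b • EuclideanSpace.proj 1 + c • EuclideanSpace.proj 2 +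
    d • EuclideanSpace.proj 3

@[simp] lemma rowCLM_apply (a b c d : ℝ) (v : EuclideanSpace ℝ (Fin 4)) :
    rowCLM a b c d v = a * v 0 + b * v 1 + c * v 2 + d * v 3 := by
  simp [rowCLM]

noncomputable def matCLM (r0 r1 r2 : EuclideanSpace ℝ (Fin 4) →L[ℝ] ℝ) :
    EuclideanSpace ℝ (Fin 4) →L[ℝ] EuclideanSpace ℝ (Fin 3) :=
  ((PiLp.continuousLinearEquiv 2 ℝ (fun _ : Fin 3 => ℝ)).symm :
      (Fin 3 → ℝ) →L[ℝ] EuclideanSpace ℝ (Fin 3)).comp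
    (ContinuousLinearMap.pi ![r0, r1, r2])

@[simp] lemma matCLM_apply (r0 r1 r2 : EuclideanSpace ℝ (Fin 4) →L[ℝ] ℝ)
    (v : EuclideanSpace ℝ (Fin 4)) (i : Fin 3) :
    matCLM r0 r1 r2 v i = ![r0, r1, r2] i v := by
  simp [matCLM]

lemma proj_matCLM (r0 r1 r2 : EuclideanSpace ℝ (Fin 4) →L[ℝ] ℝ) (i : Fin 3) :
    (PiLp.proj 2 (fun _ : Fin 3 => ℝ) i).comp (matCLM r0 r1 r2) = ![r0, r1, r2] i := by
  ext v; simp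

lemma hasFDerivAt_E3 {f : EuclideanSpace ℝ (Fin 4) → EuclideanSpace ℝ (Fin 3)}
    {f' : EuclideanSpace ℝ (Fin 4) →L[ℝ] EuclideanSpace ℝ (Fin 3)}
    {y : EuclideanSpace ℝ (Fin 4)} :
    HasFDerivAt f f' y ↔
      ∀ i, HasFDerivAt (fun x => f x i) ((PiLp.proj 2 (fun _ : Fin 3 => ℝ) i).comp f') y := by
  rw [← hasFDerivWithinAt_univ, hasFDerivWithinAt_piLp 2]
  exact forall_congr' fun i => hasFDerivWithinAt_univ

noncomputable def DPhi1 (s : EuclideanSpace ℝ (Fin 4)) :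
    EuclideanSpace ℝ (Fin 4) →L[ℝ] EuclideanSpace ℝ (Fin 3) :=
  matCLM (rowCLM (2 * s 0) (2 * s 1) (-(2 * s 2)) (-(2 * s 3)))
    (rowCLM (2 * s 3) (2 * s 2) (2 * s 1) (2 * s 0))
    (rowCLM (2 * s 2) (-(2 * s 3)) (2 * s 0) (-(2 * s 1)))

noncomputable def DPhi2 (s : EuclideanSpace ℝ (Fin 4)) :
    EuclideanSpace ℝ (Fin 4) →L[ℝ] EuclideanSpace ℝ (Fin 3) :=
  matCLM (rowCLM (-(2 * s 3)) (2 * s 2) (2 * s 1) (-(2 * s 0)))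
    (rowCLM (2 * s 0) (-(2 * s 1)) (2 * s 2) (-(2 * s 3)))
    (rowCLM (-(2 * s 1)) (-(2 * s 0)) (-(2 * s 3)) (-(2 * s 2)))

lemma hasFDerivAt_Phi1 (s : EuclideanSpace ℝ (Fin 4)) : HasFDerivAt Phi1 (DPhi1 s) s := by
  rw [hasFDerivAt_E3]
  intro i
  rw [DPhi1, proj_matCLM]
  have hp : ∀ j : Fin 4, HasFDerivAt (fun x : EuclideanSpace ℝ (Fin 4) => x j)
      (EuclideanSpace.proj j : EuclideanSpace ℝ (Fin 4) →L[ℝ] ℝ) s :=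
    fun j => PiLp.hasFDerivAt_apply 2 s j
  fin_cases i <;>
    simp only [Phi1, WithLp.equiv_symm_apply, PiLp.toLp_apply, Matrix.cons_val_zero, Matrix.cons_val_one,
      Matrix.head_cons, Matrix.cons_val_two, Matrix.tail_cons, pow_two, Fin.mk_zero, Fin.mk_one,
      Fin.isValue]
  · refine HasFDerivAt.congr_fderiv
      (((((hp 0).mul (hp 0)).add ((hp 1).mul (hp 1))).sub ((hp 2).mul (hp 2))).sub
        ((hp 3).mul (hp 3))) ?_
    ext v; simp; ring
  · refine HasFDerivAt.congr_fderiv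
      ((((hp 1).mul (hp 2)).add ((hp 0).mul (hp 3))).const_mul 2) ?_
    ext v; simp; ring
  · refine HasFDerivAt.congr_fderiv
      ((((hp 0).mul (hp 2)).sub ((hp 1).mul (hp 3))).const_mul 2) ?_
    ext v; simp; ring

lemma hasFDerivAt_Phi2 (s : EuclideanSpace ℝ (Fin 4)) : HasFDerivAt Phi2 (DPhi2 s) s := by
  rw [hasFDerivAt_E3]
  intro i
  rw [DPhi2, proj_matCLM]
  have hp : ∀ j : Fin 4, HasFDerivAt (fun x : EuclideanSpace ℝ (Fin 4) => x j)
      (EuclideanSpace.proj j : EuclideanSpace ℝ (Fin 4) →L[ℝ] ℝ) s :=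
    fun j => PiLp.hasFDerivAt_apply 2 s j
  fin_cases i <;>
    simp only [Phi2, WithLp.equiv_symm_apply, PiLp.toLp_apply, Matrix.cons_val_zero, Matrix.cons_val_one,
      Matrix.head_cons, Matrix.cons_val_two, Matrix.tail_cons, pow_two, Fin.mk_zero, Fin.mk_one,
      Fin.isValue]
  · refine HasFDerivAt.congr_fderiv
      ((((hp 1).mul (hp 2)).sub ((hp 0).mul (hp 3))).const_mul 2) ?_
    ext v; simp; ring
  · refine HasFDerivAt.congr_fderiv
      (((((hp 0).mul (hp 0)).add ((hp 2).mul (hp 2))).sub ((hp 1).mul (hp 1))).sub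
        ((hp 3).mul (hp 3))) ?_
    ext v; simp; ring
  · refine HasFDerivAt.congr_fderiv
      ((((hp 0).mul (hp 1)).add ((hp 2).mul (hp 3))).const_mul (-2)) ?_
    ext v; simp; ring


/-- For `s ∈ S³`, the differential of `Φ` satisfies `DΦ_s(v₁) = 2(0, Φ₁ × Φ₂)`,
`DΦ_s(v₂) = 2(Φ₁ × Φ₂, 0)`, `DΦ_s(v₃) = 2(Φ₂, -Φ₁)`; in particular the images are
pairwise orthogonal of (Euclidean) norms `2, 2, 2√2`. -/
theorem stmt17 (s : EuclideanSpace ℝ (Fin 4)) (hs : ‖s‖ = 1) :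
    fderiv ℝ Phi s (v1 s) = ((0 : EuclideanSpace ℝ (Fin 3)),
        (2 : ℝ) • cross3 (Phi1 s) (Phi2 s)) ∧
    fderiv ℝ Phi s (v2 s) = ((2 : ℝ) • cross3 (Phi1 s) (Phi2 s),
        (0 : EuclideanSpace ℝ (Fin 3))) ∧
    fderiv ℝ Phi s (v3 s) = ((2 : ℝ) • Phi2 s, (-2 : ℝ) • Phi1 s) ∧
    ipP (fderiv ℝ Phi s (v1 s)) (fderiv ℝ Phi s (v2 s)) = 0 ∧
    ipP (fderiv ℝ Phi s (v1 s)) (fderiv ℝ Phi s (v3 s)) = 0 ∧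
    ipP (fderiv ℝ Phi s (v2 s)) (fderiv ℝ Phi s (v3 s)) = 0 ∧
    ipP (fderiv ℝ Phi s (v1 s)) (fderiv ℝ Phi s (v1 s)) = 4 ∧
    ipP (fderiv ℝ Phi s (v2 s)) (fderiv ℝ Phi s (v2 s)) = 4 ∧
    ipP (fderiv ℝ Phi s (v3 s)) (fderiv ℝ Phi s (v3 s)) = 8 := by
  have hs2 : s 0 ^ 2 + s 1 ^ 2 + s 2 ^ 2 + s 3 ^ 2 = 1 := by
    rw [EuclideanSpace.norm_eq, Real.sqrt_eq_one] at hs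
    simpa [Fin.sum_univ_four, sq_abs] using hs
  have hL : HasFDerivAt Phi ((DPhi1 s).prod (DPhi2 s)) s :=
    (hasFDerivAt_Phi1 s).prodMk (hasFDerivAt_Phi2 s)
  rw [hL.fderiv]
  have e1 : ((DPhi1 s).prod (DPhi2 s)) (v1 s) =
      ((0 : EuclideanSpace ℝ (Fin 3)), (2 : ℝ) • cross3 (Phi1 s) (Phi2 s)) := by
    refine Prod.ext ?_ ?_
    · simp only [ContinuousLinearMap.prod_apply]
      ext i
      fin_cases i <;>
        · simp [DPhi1, v1, WithLp.equiv_symm_apply, PiLp.toLp_apply]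
          ring
    · simp only [ContinuousLinearMap.prod_apply]
      ext i
      fin_cases i <;>
        simp [DPhi2, v1, cross3, Phi1, Phi2, cross_apply, WithLp.equiv_apply,
          WithLp.equiv_symm_apply, PiLp.toLp_apply, smul_eq_mul]
      · linear_combination (4*s 1*s 3 + 4*s 0*s 2) * hs2
      · linear_combination (4*s 2*s 3 - 4*s 0*s 1) * hs2
      · linear_combination (-2*s 3^2 + 2*s 2^2 + 2*s 1^2 - 2*s 0^2) * hs2
  have e2 : ((DPhi1 s).prod (DPhi2 s)) (v2 s) =
      ((2 : ℝ) • cross3 (Phi1 s) (Phi2 s), (0 : EuclideanSpace ℝ (Fin 3))) := by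
    refine Prod.ext ?_ ?_
    · simp only [ContinuousLinearMap.prod_apply]
      ext i
      fin_cases i <;>
        simp [DPhi1, v2, cross3, Phi1, Phi2, cross_apply, WithLp.equiv_apply,
          WithLp.equiv_symm_apply, PiLp.toLp_apply, smul_eq_mul]
      · linear_combination (4*s 1*s 3 + 4*s 0*s 2) * hs2
      · linear_combination (4*s 2*s 3 - 4*s 0*s 1) * hs2
      · linear_combination (-2*s 3^2 + 2*s 2^2 + 2*s 1^2 - 2*s 0^2) * hs2
    · simp only [ContinuousLinearMap.prod_apply]
      ext i
      fin_cases i <;>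
        · simp [DPhi2, v2, WithLp.equiv_symm_apply, PiLp.toLp_apply]
          ring
  have e3 : ((DPhi1 s).prod (DPhi2 s)) (v3 s) =
      ((2 : ℝ) • Phi2 s, (-2 : ℝ) • Phi1 s) := by
    refine Prod.ext ?_ ?_
    · simp only [ContinuousLinearMap.prod_apply]
      ext i
      fin_cases i <;>
        · simp [DPhi1, v3, Phi2, WithLp.equiv_symm_apply, PiLp.toLp_apply, smul_eq_mul]
          ring
    · simp only [ContinuousLinearMap.prod_apply]
      ext i
      fin_cases i <;>
        · simp [DPhi2, v3, Phi1, WithLp.equiv_symm_apply, PiLp.toLp_apply, smul_eq_mul]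
          ring
  have expand : ∀ u w : EuclideanSpace ℝ (Fin 3) × EuclideanSpace ℝ (Fin 3),
      ipP u w = (u.1 0 * w.1 0 + u.1 1 * w.1 1 + u.1 2 * w.1 2)
        + (u.2 0 * w.2 0 + u.2 1 * w.2 1 + u.2 2 * w.2 2) := by
    intro u w
    simp [ipP, PiLp.inner_apply, RCLike.inner_apply, conj_trivial, Fin.sum_univ_three]
    ring
  refine ⟨e1, e2, e3, ?_, ?_, ?_, ?_, ?_, ?_⟩ <;>
    simp only [e1, e2, e3, expand, PiLp.smul_apply, smul_eq_mul, PiLp.zero_apply] <;>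
    simp only [cross3, Phi1, Phi2, cross_apply, WithLp.equiv_apply,
      WithLp.equiv_symm_apply, PiLp.toLp_apply, Matrix.cons_val_zero, Matrix.cons_val_one, Matrix.head_cons,
      Matrix.cons_val_two, Matrix.tail_cons]
  · ring
  · ring
  · ring
  · linear_combination (4 + 4*(s 0^2+s 1^2+s 2^2+s 3^2) + 4*(s 0^2+s 1^2+s 2^2+s 3^2)^2
      + 4*(s 0^2+s 1^2+s 2^2+s 3^2)^3) * hs2
  · linear_combination (4 + 4*(s 0^2+s 1^2+s 2^2+s 3^2) + 4*(s 0^2+s 1^2+s 2^2+s 3^2)^2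
      + 4*(s 0^2+s 1^2+s 2^2+s 3^2)^3) * hs2
  · linear_combination (8 + 8*(s 0^2+s 1^2+s 2^2+s 3^2)) * hs2
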